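/- Let q be a real number with q > 0 and q ≠ 1 and let A_1, A_2 be complex numbers. If the polynomial W(x,y) = x^5 + A_1 x^3 y^2 + A_2 x y^4 satisfies W((x+(q-1)y)/√q, (x-y)/√q) = -W(x,y) identically, then q = 4 or q = 6 - 2√5. -/

import Mathlib

/-- Case n=2 of the odd-degree search: if `W(x,y) = x⁵ + A₁x³y² + A₂xy⁴`
satisfies `W^{σ_q} = -W` for some `q > 0`, `q ≠ 1`, then `q = 4` or
`q = 6 - 2√5`. -/
theorem fwe_degree_five_q_values (q : ℝ) (hq0 : 0 < q) (hq1 : q ≠ 1) (A1 A2 : ℂ)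
    (hW : ∀ x y : ℂ,
        ((x + ((q : ℂ) - 1) * y) / (Real.sqrt q : ℂ)) ^ 5 +
            A1 * ((x + ((q : ℂ) - 1) * y) / (Real.sqrt q : ℂ)) ^ 3 *
              ((x - y) / (Real.sqrt q : ℂ)) ^ 2 +
            A2 * ((x + ((q : ℂ) - 1) * y) / (Real.sqrt q : ℂ)) *
              ((x - y) / (Real.sqrt q : ℂ)) ^ 4
          = -(x ^ 5 + A1 * x ^ 3 * y ^ 2 + A2 * x * y ^ 4)) :
    q = 4 ∨ q = 6 - 2 * Real.sqrt 5 := by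
  have hsq : Real.sqrt q ^ 2 = q := Real.sq_sqrt hq0.le
  have hspos : 0 < Real.sqrt q := Real.sqrt_pos.mpr hq0
  have hc0 : (Real.sqrt q : ℂ) ≠ 0 := Complex.ofReal_ne_zero.mpr hspos.ne'
  have hc2 : ((Real.sqrt q : ℂ)) ^ 2 = (q : ℂ) := by
    rw [← Complex.ofReal_pow, hsq]
  have key : ∀ x y : ℂ,
      (x + ((q:ℂ)-1)*y)^5 + A1*(x+((q:ℂ)-1)*y)^3*(x-y)^2 + A2*(x+((q:ℂ)-1)*y)*(x-y)^4
        + ((Real.sqrt q : ℂ))^5 * (x^5 + A1*x^3*y^2 + A2*x*y^4) = 0 := by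
    intro x y
    have h := hW x y
    field_simp [hc0] at h
    apply mul_left_cancel₀ (pow_ne_zero 10 hc0)
    linear_combination ((Real.sqrt q : ℂ))^10 * h
  have h0 := key 0 1
  have h1 := key 1 1
  have h2 := key 2 1
  have h3 := key 3 1
  have h4 := key 4 1
  have h5 := key 5 1
  have E0 : 1 + A1 + A2 + ((Real.sqrt q : ℂ))^5 = 0 := by
    linear_combination (-1/120 : ℂ)*h0 + (1/24 : ℂ)*h1 + (-1/12 : ℂ)*h2
      + (1/12 : ℂ)*h3 + (-1/24 : ℂ)*h4 + (1/120 : ℂ)*h5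
  have E1 : (5*(q:ℂ) - 5) + (3*(q:ℂ)-5)*A1 + ((q:ℂ)-5)*A2 = 0 := by
    linear_combination (1/8 : ℂ)*h0 + (-7/12 : ℂ)*h1 + (13/12 : ℂ)*h2
      + (-1 : ℂ)*h3 + (11/24 : ℂ)*h4 + (-1/12 : ℂ)*h5
  have E3 : (10*(q:ℂ)^3 - 30*(q:ℂ)^2 + 30*(q:ℂ) - 10)
      + ((q:ℂ)^3 - 9*(q:ℂ)^2 + 18*(q:ℂ) - 10)*A1 + (6*(q:ℂ)-10)*A2 = 0 := by
    linear_combination (15/8 : ℂ)*h0 + (-77/12 : ℂ)*h1 + (107/12 : ℂ)*h2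
      + (-13/2 : ℂ)*h3 + (61/24 : ℂ)*h4 + (-5/12 : ℂ)*h5
  have E5 : ((q:ℂ)-1)^5 + ((q:ℂ)-1)^3*A1 + ((q:ℂ)-1)*A2 = 0 := by
    linear_combination h0
  have hR : (q:ℂ)^3 * ((q:ℂ)-1)^3 * ((q:ℂ)-4) * ((q:ℂ)^2 - 12*(q:ℂ) + 16) = 0 := by
    linear_combination (-(8*(q:ℂ) - 21*(q:ℂ)^2 + 18*(q:ℂ)^3 - 5*(q:ℂ)^4))*E1
      + (-(-8*(q:ℂ) + 15*(q:ℂ)^2 - 8*(q:ℂ)^3 + (q:ℂ)^4))*E3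
      + (-(40*(q:ℂ) - 45*(q:ℂ)^2 + 14*(q:ℂ)^3 - (q:ℂ)^4))*E5
  have hRr : q^3 * (q-1)^3 * (q-4) * (q^2 - 12*q + 16) = 0 := by
    exact_mod_cast hR
  have hne : q^3 * (q-1)^3 ≠ 0 :=
    mul_ne_zero (pow_ne_zero _ hq0.ne') (pow_ne_zero _ (sub_ne_zero.mpr hq1))
  have h4or : (q-4) * (q^2 - 12*q + 16) = 0 := by
    have h' : q^3 * (q-1)^3 * ((q-4) * (q^2 - 12*q + 16)) = 0 := by linear_combination hRr
    exact (mul_eq_zero.mp h').resolve_left hne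
  rcases mul_eq_zero.mp h4or with h | hquad
  · left; linarith
  · right
    -- the equation with the square root, to exclude q = 6 + 2√5
    have G : -(((q:ℂ)-1)*(q:ℂ)*((q:ℂ)^2-7*(q:ℂ)+8))*((Real.sqrt q : ℂ))^5
        - 2*((q:ℂ)-1)*(q:ℂ)^3*((q:ℂ)-2)^2 = 0 := by
      linear_combination (-(((q:ℂ)-1)*(q:ℂ)*((q:ℂ)^2-7*(q:ℂ)+8)))*E0
        + ((q:ℂ)*((q:ℂ)-1)*((q:ℂ)-2))*E1 + (-2*(q:ℂ))*E5
    have Gr : -((q-1)*q*(q^2-7*q+8))*(Real.sqrt q)^5 - 2*(q-1)*q^3*(q-2)^2 = 0 := by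
      exact_mod_cast G
    have h5sq : Real.sqrt 5 ^ 2 = 5 := Real.sq_sqrt (by norm_num)
    have h5gt : 2 < Real.sqrt 5 := by nlinarith [Real.sqrt_nonneg 5]
    have hfact : (q - (6 - 2*Real.sqrt 5)) * (q - (6 + 2*Real.sqrt 5)) = 0 := by
      linear_combination hquad - 4*h5sq
    rcases mul_eq_zero.mp hfact with h | h
    · linarith
    · exfalso
      have hq' : q = 6 + 2*Real.sqrt 5 := by linarith
      have hq10 : 10 < q := by rw [hq']; linarith
      have t1 : 0 < (q-1)*q*(q^2-7*q+8)*(Real.sqrt q)^5 := by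
        have f1 : (0:ℝ) < q - 1 := by linarith
        have f2 : (0:ℝ) < q^2 - 7*q + 8 := by nlinarith
        exact mul_pos (mul_pos (mul_pos f1 hq0) f2) (pow_pos hspos 5)
      have t2 : 0 < 2*(q-1)*q^3*(q-2)^2 := by
        have h2' : 0 < (q-2)^2 := pow_pos (by linarith) 2
        nlinarith
      linarith
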